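/- Let h_1,…,h_r ∈ ℝ^n and S = {x ∈ ℝ^n : h_i^T x ≤ 1, i = 1,…,r}. Let A ∈ ℝ^{n×n}, let Q ∈ ℝ^{n×n} be a symmetric positive definite matrix satisfying Q − A Q A^T ⪰ 0 (positive semidefinite) and h_i^T Q h_i ≤ 1 for every i = 1,…,r, and let x ∈ ℝ^n satisfy x^T Q^{-1} x ≤ 1. Then A^t x ∈ S for every integer t ≥ 0. -/

import Mathlib

open Matrix

lemma psd_tr {n : ℕ} {M : Matrix (Fin n) (Fin n) ℝ} (hM : M.PosSemidef) :
    Mᵀ = M := by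
  ext i j
  have := congrFun (congrFun hM.1 i) j
  simpa using this

lemma psd_nonneg {n : ℕ} {M : Matrix (Fin n) (Fin n) ℝ} (hM : M.PosSemidef)
    (z : Fin n → ℝ) : 0 ≤ z ⬝ᵥ M *ᵥ z := by
  have := hM.dotProduct_mulVec_nonneg z
  simpa using this

lemma dot_symm {n : ℕ} {M : Matrix (Fin n) (Fin n) ℝ} (hMt : Mᵀ = M)
    (a b : Fin n → ℝ) : a ⬝ᵥ M *ᵥ b = b ⬝ᵥ M *ᵥ a := by
  rw [Matrix.dotProduct_mulVec, ← Matrix.mulVec_transpose, hMt,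
    dotProduct_comm]

lemma cs_aux {n : ℕ} {M : Matrix (Fin n) (Fin n) ℝ} (hM : M.PosSemidef)
    (u v : Fin n → ℝ) :
    (u ⬝ᵥ M *ᵥ v) ^ 2 ≤ (u ⬝ᵥ M *ᵥ u) * (v ⬝ᵥ M *ᵥ v) := by
  have hMt := psd_tr hM
  have key : ∀ t : ℝ,
      0 ≤ (u ⬝ᵥ M *ᵥ u) * (t * t) + (2 * (u ⬝ᵥ M *ᵥ v)) * t + v ⬝ᵥ M *ᵥ v := by
    intro t
    have h0 := psd_nonneg hM (t • u + v)
    simp only [Matrix.mulVec_add, Matrix.mulVec_smul, dotProduct_add,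
      add_dotProduct, dotProduct_smul, smul_dotProduct, smul_eq_mul] at h0
    rw [dot_symm hMt v u] at h0
    nlinarith [h0]
  have hd := discrim_le_zero key
  rw [discrim] at hd
  nlinarith [hd]

/-- Invariant-ellipsoid certificate of infinite-step safety: if `Q ≻ 0` satisfies
`Q - A Q Aᵀ ⪰ 0` and `hᵢᵀ Q hᵢ ≤ 1` for all facets of
`S = {z : hᵢᵀ z ≤ 1}`, then any `x` with `xᵀ Q⁻¹ x ≤ 1` stays in `S` forever under
`x ↦ A x`. -/
theorem stmt_9 (n r : ℕ) (h : Fin r → Fin n → ℝ)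
    (A Q : Matrix (Fin n) (Fin n) ℝ)
    (hQ : Q.PosDef) (hlyap : (Q - A * Q * Aᵀ).PosSemidef)
    (hpolar : ∀ i, h i ⬝ᵥ (Q *ᵥ h i) ≤ 1)
    (x : Fin n → ℝ) (hx : x ⬝ᵥ (Q⁻¹ *ᵥ x) ≤ 1) :
    ∀ t : ℕ, (A ^ t) *ᵥ x ∈ {z : Fin n → ℝ | ∀ i, h i ⬝ᵥ z ≤ 1} := by
  have hP : (Q⁻¹).PosDef := hQ.inv
  have hPs : (Q⁻¹).PosSemidef := hP.posSemidef
  have hQs : Q.PosSemidef := hQ.posSemidef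
  have hQt := psd_tr hQs
  have hPt := psd_tr hPs
  have hdet : IsUnit Q.det := isUnit_iff_ne_zero.mpr hQ.det_pos.ne'
  have hQP : Q * Q⁻¹ = 1 := Matrix.mul_nonsing_inv Q hdet
  have hQPv : ∀ w : Fin n → ℝ, Q *ᵥ (Q⁻¹ *ᵥ w) = w := by
    intro w; rw [Matrix.mulVec_mulVec, hQP, Matrix.one_mulVec]
  -- invariance step
  have step : ∀ z : Fin n → ℝ,
      (A *ᵥ z) ⬝ᵥ Q⁻¹ *ᵥ (A *ᵥ z) ≤ z ⬝ᵥ Q⁻¹ *ᵥ z := by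
    intro z
    set α := (A *ᵥ z) ⬝ᵥ Q⁻¹ *ᵥ (A *ᵥ z) with hα
    set β := z ⬝ᵥ Q⁻¹ *ᵥ z with hβ
    have hα0 : 0 ≤ α := psd_nonneg hPs _
    have hβ0 : 0 ≤ β := psd_nonneg hPs _
    set u := Q⁻¹ *ᵥ (A *ᵥ z) with hu
    set v := Q⁻¹ *ᵥ z with hv
    have h1 : u ⬝ᵥ Q *ᵥ u = α := by
      rw [hu, hα, dot_symm hQt, hQPv, dotProduct_comm,
        dot_symm hPt]
    have h2 : v ⬝ᵥ Q *ᵥ v = β := by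
      rw [hv, hβ, dot_symm hQt, hQPv, dotProduct_comm,
        dot_symm hPt]
    have h3 : (Aᵀ *ᵥ u) ⬝ᵥ Q *ᵥ v = α := by
      rw [hv, hQPv, hα, hu, Matrix.mulVec_transpose,
        ← Matrix.dotProduct_mulVec, dotProduct_comm]
    have h4 : (Aᵀ *ᵥ u) ⬝ᵥ Q *ᵥ (Aᵀ *ᵥ u) ≤ u ⬝ᵥ Q *ᵥ u := by
      have hl := psd_nonneg hlyap u
      rw [Matrix.sub_mulVec, dotProduct_sub] at hl
      have he : (A * Q * Aᵀ) *ᵥ u = A *ᵥ (Q *ᵥ (Aᵀ *ᵥ u)) := by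
        simp only [Matrix.mulVec_mulVec, Matrix.mul_assoc]
      rw [he] at hl
      have he2 : u ⬝ᵥ A *ᵥ (Q *ᵥ (Aᵀ *ᵥ u)) = (Aᵀ *ᵥ u) ⬝ᵥ Q *ᵥ (Aᵀ *ᵥ u) := by
        rw [Matrix.dotProduct_mulVec u A, ← Matrix.mulVec_transpose]
      rw [he2] at hl
      linarith
    have hcs := cs_aux hQs (Aᵀ *ᵥ u) v
    rw [h2, h3] at hcs
    have hle : α ^ 2 ≤ α * β := by
      calc α ^ 2 ≤ ((Aᵀ *ᵥ u) ⬝ᵥ Q *ᵥ (Aᵀ *ᵥ u)) * β := hcs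
        _ ≤ (u ⬝ᵥ Q *ᵥ u) * β := mul_le_mul_of_nonneg_right h4 hβ0
        _ = α * β := by rw [h1]
    nlinarith [hle, hα0, hβ0]
  have inv : ∀ t : ℕ, ((A ^ t) *ᵥ x) ⬝ᵥ Q⁻¹ *ᵥ ((A ^ t) *ᵥ x) ≤ 1 := by
    intro t
    induction t with
    | zero => simpa using hx
    | succ k ih =>
      have he : (A ^ (k+1)) *ᵥ x = A *ᵥ ((A ^ k) *ᵥ x) := by
        rw [Matrix.mulVec_mulVec, ← pow_succ']
      rw [he]
      exact le_trans (step _) ih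
  intro t i
  set z := (A ^ t) *ᵥ x with hz
  have hzP : z ⬝ᵥ Q⁻¹ *ᵥ z ≤ 1 := inv t
  have hcs := cs_aux hQs (h i) (Q⁻¹ *ᵥ z)
  rw [hQPv] at hcs
  have h5 : (Q⁻¹ *ᵥ z) ⬝ᵥ z = z ⬝ᵥ Q⁻¹ *ᵥ z := dotProduct_comm _ _
  rw [h5] at hcs
  have hq := hpolar i
  have hP0 : 0 ≤ z ⬝ᵥ Q⁻¹ *ᵥ z := psd_nonneg hPs _
  have hh0 : 0 ≤ h i ⬝ᵥ Q *ᵥ h i := psd_nonneg hQs _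
  nlinarith [hcs, hq, hzP, hP0, hh0]
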